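/- arXiv:1409.5314 — 6 statements merged into one kernel-verified Lean document; each statement's English description precedes it below -/
import Mathlib

section
/- Let n ≥ 2 be an even integer. Then B_n + Σ_{p prime, (p-1) | n} 1/p is an integer, where B_n denotes the n-th Bernoulli number. -/
open Finset

section helpers
private lemma vsc_succ_lt_two_pow {m : ℕ} (hm : 2 ≤ m) : m + 1 < 2 ^ m := by
  induction m with
  | zero => omega
  | succ k ih =>
    rcases Nat.lt_or_ge k 2 with h | h
    · interval_cases k
      · omega
      · norm_num
    · have := ih h
      rw [pow_succ]; omega

private lemma vsc_val_le {q m : ℕ} (hq : q.Prime) (hm : 2 ≤ m) :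
    padicValNat q (m + 1) ≤ m - 1 := by
  by_contra h
  push_neg at h
  have hv : m ≤ padicValNat q (m + 1) := by omega
  have hdvd : q ^ m ∣ m + 1 := dvd_trans (pow_dvd_pow q hv) pow_padicValNat_dvd
  have h1 : q ^ m ≤ m + 1 := Nat.le_of_dvd (by omega) hdvd
  have h2 : 2 ^ m ≤ q ^ m := Nat.pow_le_pow_left hq.two_le m
  have := vsc_succ_lt_two_pow hm
  omega

private lemma vsc_val_le0 {q : ℕ} (hq : q.Prime) (m : ℕ) :
    padicValNat q (m + 1) ≤ m := by
  by_contra h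
  push_neg at h
  have hv : m + 1 ≤ padicValNat q (m + 1) := by omega
  have hdvd : q ^ (m + 1) ∣ m + 1 := dvd_trans (pow_dvd_pow q hv) pow_padicValNat_dvd
  have h1 : q ^ (m + 1) ≤ m + 1 := Nat.le_of_dvd (by omega) hdvd
  have h2 : 2 ^ (m + 1) ≤ q ^ (m + 1) := Nat.pow_le_pow_left hq.two_le _
  have := Nat.lt_two_pow_self (n := m + 1)
  omega

private lemma vsc_padicNorm_pow {q : ℕ} [Fact q.Prime] (x : ℚ) (k : ℕ) :
    padicNorm q (x ^ k) = padicNorm q x ^ k := by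
  induction k with
  | zero => simp [padicNorm.one]
  | succ k ih => rw [pow_succ, pow_succ, padicNorm.mul, ih]

private lemma vsc_padicNorm_nat {q : ℕ} [hq : Fact q.Prime] (m : ℕ) :
    padicNorm q ((m + 1 : ℕ) : ℚ) = (q : ℚ) ^ (-(padicValNat q (m + 1) : ℤ)) := by
  rw [padicNorm.eq_zpow_of_nonzero (by exact_mod_cast Nat.succ_ne_zero m),
    padicValRat.of_nat]

private lemma vsc_term_bound {q : ℕ} (hq : q.Prime) {c : ℚ} {s : ℤ} {m : ℕ}
    (hc : padicNorm q c ≤ (q : ℚ) ^ s)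
    (hv : (padicValNat q (m + 1) : ℤ) ≤ (m : ℤ) - s) :
    padicNorm q (c * (q : ℚ) ^ (m + 1) / ((m + 1 : ℕ) : ℚ)) ≤ (q : ℚ)⁻¹ := by
  haveI : Fact q.Prime := ⟨hq⟩
  have hq1 : (1 : ℚ) < q := by exact_mod_cast hq.one_lt
  have hq0 : (0 : ℚ) < q := lt_trans one_pos hq1
  rw [padicNorm.div, padicNorm.mul, vsc_padicNorm_pow, padicNorm.padicNorm_p_of_prime,
    vsc_padicNorm_nat]
  set v : ℤ := (padicValNat q (m + 1) : ℤ)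
  have hnn : (0:ℚ) ≤ (q:ℚ)⁻¹ ^ (m+1) := by positivity
  calc padicNorm q c * (q:ℚ)⁻¹ ^ (m + 1) / (q:ℚ) ^ (-v)
      ≤ (q:ℚ) ^ s * (q:ℚ)⁻¹ ^ (m + 1) / (q:ℚ) ^ (-v) := by
        gcongr
    _ = (q:ℚ) ^ (s - (m + 1 : ℤ) + v) := by
        rw [← zpow_natCast ((q:ℚ)⁻¹) (m+1), ← zpow_neg_one, ← zpow_mul]
        rw [← zpow_add₀ hq0.ne', ← zpow_sub₀ hq0.ne']
        congr 1
        push_cast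
        ring
    _ ≤ (q:ℚ) ^ (-1 : ℤ) := zpow_le_zpow_right₀ hq1.le (by omega)
    _ = (q:ℚ)⁻¹ := zpow_neg_one _

private lemma vsc_zmod_sum_pow (q : ℕ) [hq : Fact q.Prime] {n : ℕ} (hn : n ≠ 0) :
    ∑ x : ZMod q, x ^ n = if (q - 1) ∣ n then (-1 : ZMod q) else 0 := by
  classical
  have hcard : Fintype.card (ZMod q) = q := ZMod.card q
  let φ : (ZMod q)ˣ ↪ ZMod q := ⟨fun x ↦ x, Units.val_injective⟩
  have himg : univ.map φ = univ \ {0} := by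
    ext x
    simp only [mem_map, mem_univ, Function.Embedding.coeFn_mk, true_and, mem_sdiff,
      mem_singleton, φ]
    exact isUnit_iff_ne_zero
  calc
    ∑ x : ZMod q, x ^ n = ∑ x ∈ univ \ {(0 : ZMod q)}, x ^ n := by
      rw [← Finset.sum_sdiff (Finset.subset_univ {(0 : ZMod q)}), Finset.sum_singleton,
        zero_pow hn, add_zero]
    _ = ∑ x : (ZMod q)ˣ, ((x : ZMod q)) ^ n := by
      rw [← himg, Finset.sum_map]
      rfl
    _ = if (q - 1) ∣ n then (-1 : ZMod q) else 0 := by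
      have := FiniteField.sum_pow_units (ZMod q) n
      rw [hcard] at this
      simpa using this

private lemma vsc_sum_range_cast (q n : ℕ) [NeZero q] :
    ∑ k ∈ Finset.range q, ((k : ZMod q)) ^ n = ∑ x : ZMod q, x ^ n := by
  refine Finset.sum_nbij' (fun k ↦ (k : ZMod q)) (fun x ↦ x.val) ?_ ?_ ?_ ?_ ?_
  · intro a _; exact Finset.mem_univ _
  · intro x _; exact Finset.mem_range.mpr (ZMod.val_lt x)
  · intro a ha; exact ZMod.val_cast_of_lt (Finset.mem_range.mp ha)
  · intro x _; exact ZMod.natCast_rightInverse x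
  · intro a _; rfl

private lemma vsc_norm_A {q n : ℕ} (hq : q.Prime) (hn : n ≠ 0) :
    padicNorm q ((∑ k ∈ Finset.range q, (k : ℚ) ^ n) + if (q - 1) ∣ n then 1 else 0)
      ≤ (q : ℚ)⁻¹ := by
  haveI : Fact q.Prime := ⟨hq⟩
  haveI : NeZero q := ⟨hq.pos.ne'⟩
  set A : ℤ := (∑ k ∈ Finset.range q, (k : ℤ) ^ n) + if (q - 1) ∣ n then 1 else 0 with hA
  have hdvd : (q : ℤ) ∣ A := by
    rw [← ZMod.intCast_zmod_eq_zero_iff_dvd]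
    rw [hA]
    push_cast
    rw [vsc_sum_range_cast, vsc_zmod_sum_pow q hn]
    split_ifs <;> simp
  have hcast : ((A : ℚ)) = (∑ k ∈ Finset.range q, (k : ℚ) ^ n) + if (q - 1) ∣ n then 1 else 0 := by
    rw [hA]
    push_cast
    ring
  have := (padicNorm.dvd_iff_norm_le (p := q) (n := 1) (z := A)).mp (by simpa using hdvd)
  rw [hcast] at this
  simpa [zpow_neg_one] using this
end helpers

private lemma vsc_key : ∀ n : ℕ, 2 ≤ n → Even n → ∀ q : ℕ, q.Prime →
    padicNorm q (bernoulli n + if (q - 1) ∣ n then (q : ℚ)⁻¹ else 0) ≤ 1 := by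
  intro n
  induction n using Nat.strong_induction_on with
  | _ n ih =>
  intro h2 he q hq
  haveI : Fact q.Prime := ⟨hq⟩
  have hq1 : (1 : ℚ) < q := by exact_mod_cast hq.one_lt
  have hq0 : (0 : ℚ) < q := lt_trans one_pos hq1
  have hn1 : ((n : ℚ) + 1) ≠ 0 := by positivity
  -- reduce to a statement about q * B n + ε
  have main : padicNorm q ((q : ℚ) * bernoulli n + if (q - 1) ∣ n then 1 else 0)
      ≤ (q : ℚ)⁻¹ := by
    -- Faulhaber
    have faul := sum_range_pow q n
    rw [Finset.sum_range_succ] at faul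
    have hlast : bernoulli n * ((n + 1).choose n) * (q : ℚ) ^ (n + 1 - n) / ((n : ℚ) + 1)
        = (q : ℚ) * bernoulli n := by
      rw [Nat.choose_succ_self_right, show n + 1 - n = 1 by omega]
      push_cast
      field_simp
    rw [hlast] at faul
    have hsplit : (q : ℚ) * bernoulli n + (if (q - 1) ∣ n then 1 else 0)
        = ((∑ k ∈ Finset.range q, (k : ℚ) ^ n) + if (q - 1) ∣ n then 1 else 0)
          - ∑ i ∈ Finset.range n,
              bernoulli i * ((n + 1).choose i) * (q : ℚ) ^ (n + 1 - i) / ((n : ℚ) + 1) := by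
      rw [faul]
      push_cast
      ring
    rw [hsplit]
    refine le_trans padicNorm.sub (max_le (vsc_norm_A hq (by omega)) ?_)
    -- bound each Faulhaber term
    refine padicNorm.sum_le' (fun i hi ↦ ?_) (by positivity)
    rw [Finset.mem_range] at hi
    rcases Nat.eq_zero_or_pos i with rfl | hipos
    · -- i = 0
      have hmi : n + 1 - 0 = n + 1 := by omega
      rw [hmi]
      have : bernoulli 0 * ((n + 1).choose 0) * (q : ℚ) ^ (n + 1) / ((n : ℚ) + 1)
          = (1 : ℚ) * (q : ℚ) ^ (n + 1) / ((n + 1 : ℕ) : ℚ) := by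
        rw [bernoulli_zero, Nat.choose_zero_right]
        push_cast
        ring
      rw [this]
      refine vsc_term_bound hq (s := 0) ?_ ?_
      · rw [zpow_zero, padicNorm.one]
      · have := vsc_val_le0 hq n
        omega
    rcases eq_or_ne i 1 with rfl | hi1
    · -- i = 1
      set m : ℕ := n - 1 with hm
      have hmi : n + 1 - 1 = m + 1 := by omega
      rw [hmi]
      have : bernoulli 1 * ((n + 1).choose 1) * (q : ℚ) ^ (m + 1) / ((n : ℚ) + 1)
          = -((q : ℚ) ^ (m + 1) / 2) := by
        rw [bernoulli_one, Nat.choose_one_right]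
        push_cast
        field_simp
      rw [this, padicNorm.neg, padicNorm.div, vsc_padicNorm_pow,
        padicNorm.padicNorm_p_of_prime]
      have h2norm : (q : ℚ)⁻¹ ≤ padicNorm q 2 := by
        rcases eq_or_ne q 2 with rfl | hq2
        · rw [show ((2 : ℚ)) = ((2 : ℕ) : ℚ) by norm_num, padicNorm.padicNorm_p_of_prime]
        · have : padicNorm q ((2 : ℕ) : ℚ) = 1 := by
            rw [padicNorm.nat_eq_one_iff]
            intro hdvd
            exact hq2 ((Nat.prime_dvd_prime_iff_eq hq Nat.prime_two).mp hdvd)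
          rw [show ((2 : ℚ)) = ((2 : ℕ) : ℚ) by norm_num, this]
          exact inv_le_one_of_one_le₀ hq1.le
      have hpos2 : (0 : ℚ) < padicNorm q 2 := lt_of_lt_of_le (by positivity) h2norm
      calc (q : ℚ)⁻¹ ^ (m + 1) / padicNorm q 2
          ≤ (q : ℚ)⁻¹ ^ (m + 1) / (q : ℚ)⁻¹ := by
            gcongr
          _ = (q : ℚ)⁻¹ ^ m := by
            rw [pow_succ, mul_div_assoc, div_self (by positivity), mul_one]
          _ ≤ (q : ℚ)⁻¹ ^ 1 := by
            refine pow_le_pow_of_le_one (by positivity) (inv_le_one_of_one_le₀ hq1.le) ?_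
            omega
          _ = (q : ℚ)⁻¹ := pow_one _
    rcases Nat.even_or_odd i with hie | hio
    · -- i even, 2 ≤ i < n : use induction hypothesis
      set m : ℕ := n - i with hm
      have hmi : n + 1 - i = m + 1 := by omega
      rw [hmi]
      have hi2 : 2 ≤ i := by
        rcases hie with ⟨j, hj⟩
        omega
      have hm2 : 2 ≤ m := by
        rcases he with ⟨a, ha⟩
        rcases hie with ⟨b, hb⟩
        omega
      -- choose identity
      have hnat : (n + 1).choose i * (m + 1) = (n + 1) * n.choose m := by
        have h1 : (n + 1).choose i = (n + 1).choose (m + 1) := by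
          rw [show m + 1 = n + 1 - i by omega]
          exact (Nat.choose_symm (by omega)).symm
        rw [h1]
        have := Nat.add_one_mul_choose_eq n m
        exact this.symm
      have hQ : ((n + 1).choose i : ℚ) * ((m : ℚ) + 1) = ((n : ℚ) + 1) * (n.choose m : ℚ) := by
        exact_mod_cast congrArg (fun x : ℕ => (x : ℚ)) hnat
      have hrw : bernoulli i * ((n + 1).choose i) * (q : ℚ) ^ (m + 1) / ((n : ℚ) + 1)
          = ((n.choose m : ℚ) * bernoulli i) * (q : ℚ) ^ (m + 1) / ((m + 1 : ℕ) : ℚ) := by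
        have hm0 : ((m : ℚ) + 1) ≠ 0 := by positivity
        push_cast
        field_simp
        linear_combination (bernoulli i) * hQ
      rw [hrw]
      refine vsc_term_bound hq (s := 1) ?_ ?_
      · -- padicNorm q (C * B i) ≤ q
        have hBi := ih i hi hi2 hie q hq
        have hBnorm : padicNorm q (bernoulli i) ≤ (q : ℚ) := by
          have hsub : bernoulli i
              = (bernoulli i + if (q - 1) ∣ i then (q : ℚ)⁻¹ else 0)
                - (if (q - 1) ∣ i then (q : ℚ)⁻¹ else 0) := by ring
          rw [hsub]
          refine le_trans padicNorm.sub (max_le (le_trans hBi hq1.le) ?_)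
          split_ifs
          · rw [show ((q : ℚ)⁻¹) = 1 / (q : ℚ) by ring, padicNorm.div, padicNorm.one,
              padicNorm.padicNorm_p_of_prime, one_div, inv_inv]
          · rw [padicNorm.zero]
            exact hq0.le
        rw [zpow_one, padicNorm.mul]
        calc padicNorm q ((n.choose m : ℚ)) * padicNorm q (bernoulli i)
            ≤ 1 * (q : ℚ) :=
              mul_le_mul (padicNorm.of_nat _) hBnorm (padicNorm.nonneg _) zero_le_one
          _ = (q : ℚ) := one_mul _
      · have := vsc_val_le hq hm2
        omega
    · -- i odd, i >= 3: bernoulli i = 0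
      rw [show n + 1 - i = (n - i) + 1 by omega]
      have hi1' : 1 < i := by omega
      have : bernoulli i = 0 := by
        rw [bernoulli_eq_bernoulli'_of_ne_one (by omega)]
        exact bernoulli'_eq_zero_of_odd hio hi1'
      rw [this]
      simpa using (by positivity : (0:ℚ) ≤ (q:ℚ)⁻¹)
  -- conclude
  have hmul : (q : ℚ) * (bernoulli n + if (q - 1) ∣ n then (q : ℚ)⁻¹ else 0)
      = (q : ℚ) * bernoulli n + if (q - 1) ∣ n then 1 else 0 := by
    split_ifs
    · field_simp
    · simp
  rw [← hmul] at main
  rw [padicNorm.mul, padicNorm.padicNorm_p_of_prime] at main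
  exact le_of_mul_le_mul_left (by rw [mul_one]; exact main) (inv_pos.mpr hq0)


/-- von Staudt–Clausen: for even `n ≥ 2`, `B_n + ∑_{(p-1) ∣ n, p prime} 1/p ∈ ℤ`. -/
theorem von_staudt_clausen (n : ℕ) (h2 : 2 ≤ n) (he : Even n) :
    ∃ z : ℤ, bernoulli n +
        ∑ p ∈ (Finset.range (n + 2)).filter (fun p => Nat.Prime p ∧ (p - 1) ∣ n),
          ((p : ℚ))⁻¹ = (z : ℚ) := by
  classical
  set P := (Finset.range (n + 2)).filter (fun p => Nat.Prime p ∧ (p - 1) ∣ n) with hP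
  set x : ℚ := bernoulli n + ∑ p ∈ P, ((p : ℚ))⁻¹ with hx
  have hnorm : ∀ q : ℕ, q.Prime → padicNorm q x ≤ 1 := by
    intro q hq
    haveI : Fact q.Prime := ⟨hq⟩
    have hone : ∀ p ∈ P, p ≠ q → padicNorm q ((p : ℚ))⁻¹ = 1 := by
      intro p hp hne
      have hpp : p.Prime := (Finset.mem_filter.mp hp).2.1
      have h1 : padicNorm q ((p : ℕ) : ℚ) = 1 := by
        rw [padicNorm.nat_eq_one_iff]
        intro hdvd
        exact hne ((Nat.prime_dvd_prime_iff_eq hq hpp).mp hdvd).symm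
      rw [show ((p : ℚ))⁻¹ = 1 / ((p : ℕ) : ℚ) by push_cast; ring, padicNorm.div,
        padicNorm.one, h1, div_one]
    by_cases hqP : q ∈ P
    · have hdvd : (q - 1) ∣ n := (Finset.mem_filter.mp hqP).2.2
      have hxeq : x = (bernoulli n + if (q - 1) ∣ n then (q : ℚ)⁻¹ else 0)
          + ∑ p ∈ P.erase q, ((p : ℚ))⁻¹ := by
        rw [hx, if_pos hdvd, ← Finset.add_sum_erase P _ hqP]
        ring
      rw [hxeq]
      refine le_trans padicNorm.nonarchimedean (max_le (vsc_key n h2 he q hq) ?_)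
      refine padicNorm.sum_le' (fun p hp => ?_) zero_le_one
      rw [hone p (Finset.mem_of_mem_erase hp) (Finset.ne_of_mem_erase hp)]
    · have hnd : ¬(q - 1) ∣ n := by
        intro hdvd
        apply hqP
        refine Finset.mem_filter.mpr ⟨Finset.mem_range.mpr ?_, hq, hdvd⟩
        have h1 : q - 1 ≤ n := Nat.le_of_dvd (by omega) hdvd
        have := hq.two_le
        omega
      have hxeq : x = (bernoulli n + if (q - 1) ∣ n then (q : ℚ)⁻¹ else 0)
          + ∑ p ∈ P, ((p : ℚ))⁻¹ := by
        rw [hx, if_neg hnd, add_zero]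
      rw [hxeq]
      refine le_trans padicNorm.nonarchimedean (max_le (vsc_key n h2 he q hq) ?_)
      refine padicNorm.sum_le' (fun p hp => ?_) zero_le_one
      have hne : p ≠ q := fun h => hqP (h ▸ hp)
      rw [hone p hp hne]
  have hden : x.den = 1 := by
    by_contra hd
    set q := x.den.minFac with hqdef
    have hqprime : q.Prime := Nat.minFac_prime hd
    haveI : Fact q.Prime := ⟨hqprime⟩
    have hqden : q ∣ x.den := Nat.minFac_dvd _
    have hx0 : x ≠ 0 := by
      intro h0
      rw [h0] at hd
      simp at hd
    have hnum : ¬(q : ℤ) ∣ x.num := by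
      intro hdvd
      have h1 : q ∣ x.num.natAbs := Int.natCast_dvd.mp hdvd
      have h2 : q ∣ Nat.gcd x.num.natAbs x.den := Nat.dvd_gcd h1 hqden
      rw [x.reduced] at h2
      have := Nat.le_of_dvd one_pos h2
      have := hqprime.two_le
      omega
    have hval : padicValRat q x < 0 := by
      unfold padicValRat
      have h1 : padicValInt q x.num = 0 := padicValInt.eq_zero_of_not_dvd hnum
      have h2 : 1 ≤ padicValNat q x.den := one_le_padicValNat_of_dvd x.den_pos.ne' hqden
      omega
    have hbig : 1 < padicNorm q x := by
      rw [padicNorm.eq_zpow_of_nonzero hx0]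
      have hq1 : (1 : ℚ) < q := by exact_mod_cast hqprime.one_lt
      calc (1 : ℚ) = (q : ℚ) ^ (0 : ℤ) := (zpow_zero _).symm
        _ < (q : ℚ) ^ (-padicValRat q x) := by
          apply zpow_lt_zpow_right₀ hq1
          omega
    linarith [hnorm q hqprime]
  exact ⟨x.num, ((Rat.den_eq_one_iff x).mp hden).symm⟩
end

section
/- Let p be an odd prime and define the polynomial e_1(X) = (1/p!) · Π_{a=1}^{(p-1)/2} (X² - a²) ∈ ℚ[X]. Then for every x ∈ ℤ_p^* (p-adic unit), e_1(x) ∈ ℤ_p. -/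
open Polynomial

/-- For an odd prime `p`, the polynomial `e₁(X) = (1/p!)·∏_{a=1}^{(p-1)/2} (X² - a²)`
maps `p`-adic units to `p`-adic integers. -/
theorem e_one_maps_units_to_integers (p : ℕ) [Fact p.Prime] (hp : p ≠ 2)
    (x : ℤ_[p]) (hx : IsUnit x) :
    ‖Polynomial.aeval ((x : ℚ_[p]))
        (Polynomial.C (((Nat.factorial p : ℚ))⁻¹) *
          ∏ a ∈ Finset.Icc 1 ((p - 1) / 2),
            (Polynomial.X ^ 2 - Polynomial.C ((a : ℚ)) ^ 2))‖ ≤ 1 := by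
  have hprime : p.Prime := Fact.out
  have hodd : p % 2 = 1 := Nat.odd_iff.mp (hprime.odd_of_ne_two hp)
  -- the integral product
  set y : ℤ_[p] := ∏ a ∈ Finset.Icc 1 ((p - 1) / 2), (x ^ 2 - (a : ℤ_[p]) ^ 2) with hy
  -- rewrite the evaluation
  have hcoe : ((y : ℤ_[p]) : ℚ_[p])
      = ∏ a ∈ Finset.Icc 1 ((p - 1) / 2), (((x : ℚ_[p])) ^ 2 - (a : ℚ_[p]) ^ 2) := by
    rw [hy, show ((∏ a ∈ Finset.Icc 1 ((p - 1) / 2), (x ^ 2 - (a : ℤ_[p]) ^ 2) : ℤ_[p]) : ℚ_[p])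
        = PadicInt.Coe.ringHom (∏ a ∈ Finset.Icc 1 ((p - 1) / 2), (x ^ 2 - (a : ℤ_[p]) ^ 2))
      from rfl, map_prod]
    refine Finset.prod_congr rfl fun a _ => ?_
    show ((x ^ 2 - (a : ℤ_[p]) ^ 2 : ℤ_[p]) : ℚ_[p]) = _
    push_cast
    ring
  have heval : Polynomial.aeval ((x : ℚ_[p]))
        (Polynomial.C (((Nat.factorial p : ℚ))⁻¹) *
          ∏ a ∈ Finset.Icc 1 ((p - 1) / 2),
            (Polynomial.X ^ 2 - Polynomial.C ((a : ℚ)) ^ 2)) =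
      ((Nat.factorial p : ℚ_[p]))⁻¹ * (y : ℚ_[p]) := by
    rw [map_mul, map_prod, hcoe]
    congr 1
    · rw [aeval_C]
      push_cast
      rfl
    · refine Finset.prod_congr rfl fun a _ => ?_
      simp [aeval_C]
  rw [heval]
  -- p divides y
  have hpz : (p : ℤ_[p]) ∣ y := by
    -- find a suitable a
    have hxz : PadicInt.toZMod x ≠ 0 := (hx.map PadicInt.toZMod).ne_zero
    set r : ℕ := (PadicInt.toZMod x).val with hr
    have hr0 : r ≠ 0 := fun h => hxz (by
      have := ZMod.val_cast_of_lt (show 0 < p from hprime.pos)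
      rwa [← ZMod.val_eq_zero])
    have hrlt : r < p := ZMod.val_lt _
    have hrx : (r : ZMod p) = PadicInt.toZMod x := by
      exact ZMod.natCast_zmod_val _
    set a : ℕ := min r (p - r) with ha
    have ha1 : a ∈ Finset.Icc 1 ((p - 1) / 2) := by
      simp only [Finset.mem_Icc]
      omega
    have hsq : ((a : ZMod p)) ^ 2 = (PadicInt.toZMod x) ^ 2 := by
      rw [← hrx]
      rcases min_cases r (p - r) with ⟨h1, _⟩ | ⟨h1, _⟩
      · rw [ha, h1]
      · rw [ha, h1]
        have : ((p - r : ℕ) : ZMod p) = -(r : ZMod p) := by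
          have : ((p - r : ℕ) : ZMod p) + (r : ZMod p) = ((p : ℕ) : ZMod p) := by
            rw [← Nat.cast_add]
            congr 1
            omega
          simp at this
          linear_combination this
        rw [this]
        ring
    have hfac : (p : ℤ_[p]) ∣ (x ^ 2 - (a : ℤ_[p]) ^ 2) := by
      have : PadicInt.toZMod (x ^ 2 - (a : ℤ_[p]) ^ 2) = 0 := by
        have := hsq
        simp only [map_sub, map_pow, map_natCast]
        rw [this, sub_self]
      have hker : (x ^ 2 - (a : ℤ_[p]) ^ 2) ∈ RingHom.ker (PadicInt.toZMod (p := p)) := this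
      rw [PadicInt.ker_toZMod, PadicInt.maximalIdeal_eq_span_p,
        Ideal.mem_span_singleton] at hker
      exact hker
    exact hfac.trans (Finset.dvd_prod_of_mem _ ha1)
  -- norm estimates
  obtain ⟨c, hc⟩ := hpz
  have hny : ‖y‖ ≤ (p : ℝ)⁻¹ := by
    rw [hc, norm_mul, PadicInt.norm_p]
    calc (p : ℝ)⁻¹ * ‖c‖ ≤ (p : ℝ)⁻¹ * 1 := by
          gcongr; exact c.norm_le_one
      _ = (p : ℝ)⁻¹ := mul_one _
  have hfactnorm : ‖((Nat.factorial p : ℚ_[p]))‖ = (p : ℝ)⁻¹ := by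
    have hpred : p * Nat.factorial (p - 1) = Nat.factorial p :=
      Nat.mul_factorial_pred hprime.ne_zero
    have h1 : ‖((Nat.factorial (p - 1) : ℚ_[p]))‖ = 1 := by
      rcases lt_or_eq_of_le (show ‖((Nat.factorial (p-1) : ℤ) : ℚ_[p])‖ ≤ 1 from
        Padic.norm_int_le_one _) with h | h
      · exfalso
        rw [Padic.norm_intCast_lt_one_iff] at h
        have : p ∣ Nat.factorial (p - 1) := by exact_mod_cast h
        have := (Nat.Prime.dvd_factorial hprime).mp this
        omega
      · exact_mod_cast h
    rw [← hpred]
    push_cast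
    rw [norm_mul, h1, mul_one, Padic.norm_p]
  have hfactne : ((Nat.factorial p : ℚ_[p])) ≠ 0 := by
    have : (Nat.factorial p : ℚ_[p]) ≠ 0 := by
      exact_mod_cast Nat.cast_ne_zero.mpr (Nat.factorial_ne_zero p)
    exact this
  rw [norm_mul, norm_inv, hfactnorm, inv_inv, PadicInt.padic_norm_e_of_padicInt]
  calc (p : ℝ) * ‖y‖ ≤ (p : ℝ) * (p : ℝ)⁻¹ := by
        gcongr
    _ = 1 := mul_inv_cancel₀ (by exact_mod_cast hprime.pos.ne')
end

section
/- Let p be a prime, j ≥ 2, and define e_j(X) = (1/(p^j)!) · Π_{a ∈ {0,...,⌊p^j/2⌋}, gcd(a,p)=1} (X² - a²) ∈ ℚ[X]. Then e_j(x) ∈ ℤ_p for every x ∈ ℤ_p^*. -/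
open Polynomial

lemma asc_prod {R : Type*} [CommSemiring R] (n : ℕ) (z : R) :
    (ascPochhammer R n).eval z = ∏ i ∈ Finset.range n, (z + i) := by
  induction n with
  | zero => simp
  | succ n ih => rw [ascPochhammer_succ_eval, ih, Finset.prod_range_succ]

lemma norm_prod_range_sub_le (p : ℕ) [Fact p.Prime] (n : ℕ) (z : ℤ_[p]) (lo : ℤ) :
    ‖∏ i ∈ Finset.range n, (z - ((lo + i : ℤ) : ℤ_[p]))‖ ≤ ‖(n.factorial : ℤ_[p])‖ := by
  have h : ∏ i ∈ Finset.range n, (z - ((lo + i : ℤ) : ℤ_[p]))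
      = (ascPochhammer ℤ_[p] n).eval (z - ((lo + (n:ℤ) - 1 : ℤ) : ℤ_[p])) := by
    rw [asc_prod, ← Finset.prod_range_reflect]
    refine Finset.prod_congr rfl fun i hi => ?_
    have hi' : i < n := Finset.mem_range.mp hi
    have h1 : ((n - 1 - i : ℕ) : ℤ) = (n:ℤ) - 1 - i := by omega
    rw [h1]; push_cast; ring
  rw [h]
  exact PadicInt.norm_ascPochhammer_le n _

lemma core (p : ℕ) [Fact p.Prime] (n m : ℕ) (hnm : n / 2 = m) (hn4 : 4 ≤ n)
    (hkey : ∀ a : ℕ, a ≤ m → Nat.gcd a p = 1 → (a:ℤ) ≤ (n:ℤ) - 1 - m)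
    (x : ℤ_[p]) (hx : IsUnit x) :
    ‖∏ a ∈ (Finset.range (m + 1)).filter (fun a => Nat.gcd a p = 1),
        (x ^ 2 - (a : ℤ_[p]) ^ 2)‖ ≤ ‖(n.factorial : ℤ_[p])‖ := by
  have hp : p.Prime := Fact.out
  set S := (Finset.range (m + 1)).filter (fun a => Nat.gcd a p = 1) with hS
  have hS0 : ∀ a ∈ S, a ≠ 0 := by
    intro a ha h0
    obtain ⟨-, h2⟩ := Finset.mem_filter.mp ha
    rw [h0, Nat.gcd_zero_left] at h2
    exact hp.ne_one h2
  have hSnd : ∀ a ∈ S, ¬ p ∣ a := by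
    intro a ha
    obtain ⟨-, h2⟩ := Finset.mem_filter.mp ha
    exact hp.coprime_iff_not_dvd.mp (Nat.coprime_comm.mp h2)
  have hSle : ∀ a ∈ S, a ≤ m := by
    intro a ha
    have := Finset.mem_range.mp (Finset.mem_filter.mp ha).1
    omega
  have hSkey : ∀ a ∈ S, (a:ℤ) ≤ (n:ℤ) - 1 - m := by
    intro a ha
    exact hkey a (hSle a ha) (Finset.mem_filter.mp ha).2
  -- full interval bound
  have hfull : ‖∏ c ∈ Finset.Icc (-(m:ℤ)) ((n:ℤ) - 1 - m), (x - (c : ℤ_[p]))‖ ≤ ‖(n.factorial : ℤ_[p])‖ := by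
    have hre : ∏ c ∈ Finset.Icc (-(m:ℤ)) ((n:ℤ) - 1 - m), (x - (c : ℤ_[p]))
        = ∏ i ∈ Finset.range n, (x - ((-(m:ℤ) + i : ℤ) : ℤ_[p])) := by
      refine Finset.prod_nbij' (fun c => (c + m).toNat) (fun i => -(m:ℤ) + i)
        ?_ ?_ ?_ ?_ ?_
      · intro c hc
        have := Finset.mem_Icc.mp hc
        simp only [Finset.mem_range]
        omega
      · intro i hi
        have := Finset.mem_range.mp hi
        simp only [Finset.mem_Icc]
        constructor <;> omega
      · intro c hc
        have := Finset.mem_Icc.mp hc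
        omega
      · intro i hi
        have := Finset.mem_range.mp hi
        omega
      · intro c hc
        have h1 := Finset.mem_Icc.mp hc
        have h2 : (-(m:ℤ) + ((c + m).toNat : ℤ)) = c := by omega
        simp only [h2]
    rw [hre]
    exact norm_prod_range_sub_le p n x _
  -- factors with p ∣ c have norm 1
  have hxn : ‖x‖ = 1 := PadicInt.isUnit_iff.mp hx
  have hone : ∀ c : ℤ, (p:ℤ) ∣ c → ‖x - (c : ℤ_[p])‖ = 1 := by
    intro c hc
    obtain ⟨d, rfl⟩ := hc
    have hcn : ‖(((p:ℤ) * d : ℤ) : ℤ_[p])‖ < 1 := by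
      push_cast
      rw [norm_mul, PadicInt.norm_p]
      have h1 : ((p:ℝ))⁻¹ < 1 := by
        rw [inv_lt_one_iff₀]
        right
        exact_mod_cast hp.one_lt
      have h2 : ‖((d:ℤ) : ℤ_[p])‖ ≤ 1 := PadicInt.norm_le_one _
      have h3 : (0:ℝ) < (p:ℝ)⁻¹ := inv_pos.mpr (by exact_mod_cast hp.pos)
      nlinarith
    have hne : ‖x‖ ≠ ‖-(((p:ℤ) * d : ℤ) : ℤ_[p])‖ := by
      rw [hxn, norm_neg]
      exact ne_of_gt hcn
    rw [sub_eq_add_neg, PadicInt.norm_add_eq_max_of_ne hne, hxn, norm_neg]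
    exact max_eq_left (le_of_lt hcn)
  have hdivnorm : ‖∏ c ∈ (Finset.Icc (-(m:ℤ)) ((n:ℤ) - 1 - m)).filter (fun c => (p:ℤ) ∣ c), (x - (c : ℤ_[p]))‖ = 1 := by
    refine Finset.prod_induction _ (fun z => ‖z‖ = 1) (fun a b ha hb => ?_) norm_one ?_
    · have ha' : ‖a‖ = 1 := ha
      have hb' : ‖b‖ = 1 := hb
      show ‖a * b‖ = 1
      rw [norm_mul, ha', hb', one_mul]
    · intro c hc
      exact hone c (Finset.mem_filter.mp hc).2
  -- non-divisible part equals the S-product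
  have hsplit : (Finset.Icc (-(m:ℤ)) ((n:ℤ) - 1 - m)).filter (fun c => ¬ (p:ℤ) ∣ c)
      = (S.image (fun a : ℕ => (a:ℤ))) ∪ (S.image (fun a : ℕ => -(a:ℤ))) := by
    ext c
    simp only [Finset.mem_filter, Finset.mem_Icc, Finset.mem_union, Finset.mem_image,
      Finset.mem_range, hS]
    constructor
    · rintro ⟨⟨h1, h2⟩, h3⟩
      rcases le_or_gt 0 c with hc | hc
      · left
        refine ⟨c.toNat, ⟨by omega, ?_⟩, by omega⟩
        have hd : ¬ p ∣ c.toNat := by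
          intro h
          apply h3
          have h' := Int.natCast_dvd_natCast.mpr h
          rwa [Int.toNat_of_nonneg hc] at h'
        exact Nat.coprime_comm.mp (hp.coprime_iff_not_dvd.mpr hd)
      · right
        refine ⟨(-c).toNat, ⟨by omega, ?_⟩, by omega⟩
        have hd : ¬ p ∣ (-c).toNat := by
          intro h
          apply h3
          have h' := Int.natCast_dvd_natCast.mpr h
          rw [Int.toNat_of_nonneg (by omega : (0:ℤ) ≤ -c)] at h'
          exact (dvd_neg).mp h'
        exact Nat.coprime_comm.mp (hp.coprime_iff_not_dvd.mpr hd)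
    · rintro (⟨a, ha, rfl⟩ | ⟨a, ha, rfl⟩)
      · have haS : a ∈ S := Finset.mem_filter.mpr ⟨Finset.mem_range.mpr ha.1, ha.2⟩
        have h1 := hSkey a haS
        have h2 := hSnd a haS
        refine ⟨⟨by omega, h1⟩, fun h => h2 (Int.natCast_dvd_natCast.mp h)⟩
      · have haS : a ∈ S := Finset.mem_filter.mpr ⟨Finset.mem_range.mpr ha.1, ha.2⟩
        have h2 := hSnd a haS
        have h3 := hSle a haS
        refine ⟨⟨by omega, by omega⟩, fun h => ?_⟩
        rw [dvd_neg] at h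
        exact h2 (Int.natCast_dvd_natCast.mp h)
  -- disjointness of the images
  have hdisj : Disjoint (S.image (fun a : ℕ => (a:ℤ))) (S.image (fun a : ℕ => -(a:ℤ))) := by
    rw [Finset.disjoint_left]
    intro c h1 h2
    obtain ⟨a, ha, hae⟩ := Finset.mem_image.mp h1
    obtain ⟨b, hb, hbe⟩ := Finset.mem_image.mp h2
    have ha0 := hS0 a ha
    have hb0 := hS0 b hb
    omega
  have hSprod : ∏ c ∈ (Finset.Icc (-(m:ℤ)) ((n:ℤ) - 1 - m)).filter (fun c => ¬ (p:ℤ) ∣ c), (x - (c : ℤ_[p]))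
      = ∏ a ∈ S, (x ^ 2 - (a : ℤ_[p]) ^ 2) := by
    rw [hsplit, Finset.prod_union hdisj,
      Finset.prod_image (fun a _ b _ h => by exact_mod_cast h),
      Finset.prod_image (fun a _ b _ h => by omega),
      ← Finset.prod_mul_distrib]
    refine Finset.prod_congr rfl fun a _ => ?_
    push_cast
    ring
  calc ‖∏ a ∈ S, (x ^ 2 - (a : ℤ_[p]) ^ 2)‖
      = ‖∏ a ∈ S, (x ^ 2 - (a : ℤ_[p]) ^ 2)‖
        * ‖∏ c ∈ (Finset.Icc (-(m:ℤ)) ((n:ℤ) - 1 - m)).filter (fun c => (p:ℤ) ∣ c), (x - (c : ℤ_[p]))‖ := by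
        rw [hdivnorm, mul_one]
    _ = ‖∏ c ∈ Finset.Icc (-(m:ℤ)) ((n:ℤ) - 1 - m), (x - (c : ℤ_[p]))‖ := by
        rw [← hSprod, ← norm_mul, mul_comm,
          Finset.prod_filter_mul_prod_filter_not]
    _ ≤ ‖(n.factorial : ℤ_[p])‖ := hfull

/-- For `j ≥ 2`, the polynomial
`e_j(X) = (1/(p^j)!)·∏_{0 ≤ a ≤ ⌊p^j/2⌋, gcd(a,p)=1} (X² - a²)`
maps `p`-adic units to `p`-adic integers. -/
theorem e_j_maps_units_to_integers (p : ℕ) [Fact p.Prime] (j : ℕ) (hj : 2 ≤ j)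
    (x : ℤ_[p]) (hx : IsUnit x) :
    ‖Polynomial.aeval ((x : ℚ_[p]))
        (Polynomial.C (((Nat.factorial (p ^ j) : ℚ))⁻¹) *
          ∏ a ∈ (Finset.range (p ^ j / 2 + 1)).filter (fun a => Nat.gcd a p = 1),
            (Polynomial.X ^ 2 - Polynomial.C ((a : ℚ)) ^ 2))‖ ≤ 1 := by
  have hp : p.Prime := Fact.out
  have hn4 : 4 ≤ p ^ j := by
    calc (4:ℕ) = 2 ^ 2 := by norm_num
    _ ≤ 2 ^ j := Nat.pow_le_pow_right (by norm_num) hj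
    _ ≤ p ^ j := Nat.pow_le_pow_left hp.two_le j
  have hkey : ∀ a : ℕ, a ≤ p ^ j / 2 → Nat.gcd a p = 1 →
      (a:ℤ) ≤ ((p ^ j : ℕ):ℤ) - 1 - (p ^ j / 2 : ℕ) := by
    intro a h1 h2
    rcases eq_or_ne p 2 with hp2 | hp2
    · have h4 : 4 ∣ p ^ j := by
        rw [hp2]
        have h := pow_dvd_pow 2 hj
        norm_num at h
        exact h
      have hodd : ¬ 2 ∣ a := by
        rw [← hp2]
        exact hp.coprime_iff_not_dvd.mp (Nat.coprime_comm.mp h2)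
      omega
    · have hno : Odd (p ^ j) := (hp.odd_of_ne_two hp2).pow
      have := Nat.odd_iff.mp hno
      omega
  have hcore := core p (p ^ j) (p ^ j / 2) rfl hn4 hkey x hx
  -- rewrite the aeval
  rw [map_mul, aeval_C, map_prod]
  simp only [map_sub, map_pow, aeval_X, aeval_C, map_inv₀, map_natCast]
  rw [norm_mul, norm_inv]
  have hfacQ : ((p ^ j).factorial : ℚ_[p]) = (((p ^ j).factorial : ℤ_[p]) : ℚ_[p]) := by
    push_cast; ring
  have hfacpos : (0:ℝ) < ‖((p ^ j).factorial : ℚ_[p])‖ :=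
    norm_pos_iff.mpr (Nat.cast_ne_zero.mpr (p ^ j).factorial_ne_zero)
  rw [inv_mul_le_iff₀ hfacpos, mul_one]
  have hprodcast : ((∏ a ∈ (Finset.range (p ^ j / 2 + 1)).filter (fun a => Nat.gcd a p = 1),
          (x ^ 2 - (a : ℤ_[p]) ^ 2) : ℤ_[p]) : ℚ_[p])
      = ∏ a ∈ (Finset.range (p ^ j / 2 + 1)).filter (fun a => Nat.gcd a p = 1),
          ((x:ℚ_[p]) ^ 2 - (a:ℚ_[p]) ^ 2) := by
    refine (map_prod (PadicInt.Coe.ringHom (p := p)) _ _).trans ?_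
    refine Finset.prod_congr rfl fun a _ => ?_
    show ((x ^ 2 - (a : ℤ_[p]) ^ 2 : ℤ_[p]) : ℚ_[p]) = _
    push_cast
    ring
  rw [← hprodcast, hfacQ, PadicInt.padic_norm_e_of_padicInt, PadicInt.padic_norm_e_of_padicInt]
  exact hcore
end

section
/- Let p be a prime and n ≥ 1. The map ψ_n : ℤ/p^nℤ → 𝔽_p^n sending x to the tuple (C(x + ⌊p^j/2⌋, p^j) mod p)_{0 ≤ j ≤ n-1} is well-defined and bijective. -/
/-- `C(a, p^k) ≡ (a / p^k) mod p` (consequence of Lucas's theorem). -/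
lemma choose_pow_eq_digit (p : ℕ) [Fact p.Prime] (k : ℕ) : ∀ a : ℕ,
    ((Nat.choose a (p ^ k) : ZMod p)) = ((a / p ^ k % p : ℕ) : ZMod p) := by
  induction k with
  | zero => intro a; simp [Nat.choose_one_right, ZMod.natCast_mod]
  | succ k ih =>
    intro a
    have hp := (Fact.out : p.Prime).pos
    have h := (ZMod.natCast_eq_natCast_iff _ _ _).mpr
      (Choose.choose_modEq_choose_mod_mul_choose_div_nat (n := a) (k := p ^ (k + 1)) (p := p))
    rw [h]
    have h1 : p ^ (k + 1) % p = 0 := by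
      rw [pow_succ]; exact Nat.mul_mod_left _ _
    have h2 : p ^ (k + 1) / p = p ^ k := by
      rw [pow_succ]; exact Nat.mul_div_cancel _ hp
    rw [h1, h2, Nat.choose_zero_right, Nat.cast_mul, Nat.cast_one, one_mul, ih,
      Nat.div_div_eq_div_mul, ← pow_succ']

lemma mod_mul_decomp (a n k : ℕ) : a % (n * k) = n * (a / n % k) + a % n := by
  conv_lhs => rw [← Nat.div_add_mod (a % (n * k)) n]
  rw [Nat.mod_mod_of_dvd a (dvd_mul_right n k), Nat.mod_mul_right_div_self]

/-- The map `ψ_n : ℤ/p^nℤ → 𝔽_p^n`, `x ↦ (C(x + ⌊p^j/2⌋, p^j) mod p)_{0 ≤ j ≤ n-1}`,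
is well defined (depends only on `x` mod `p^n`) and bijective. -/
theorem psi_n_bijective (p : ℕ) (hp : Nat.Prime p) (n : ℕ) (hn : 1 ≤ n) :
    (∀ x y : ℕ, x ≡ y [MOD p ^ n] →
        (fun j : Fin n => ((Nat.choose (x + p ^ (j : ℕ) / 2) (p ^ (j : ℕ)) : ZMod p))) =
          (fun j : Fin n => ((Nat.choose (y + p ^ (j : ℕ) / 2) (p ^ (j : ℕ)) : ZMod p)))) ∧
    Function.Bijective (fun (x : ZMod (p ^ n)) (j : Fin n) =>
      ((Nat.choose (x.val + p ^ (j : ℕ) / 2) (p ^ (j : ℕ)) : ZMod p))) := by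
  haveI : Fact p.Prime := ⟨hp⟩
  haveI : NeZero (p ^ n) := ⟨pow_ne_zero n hp.pos.ne'⟩
  constructor
  · -- well-definedness
    intro x y hxy
    funext j
    rw [choose_pow_eq_digit, choose_pow_eq_digit]
    congr 1
    rw [← Nat.mod_mul_right_div_self, ← Nat.mod_mul_right_div_self, ← pow_succ]
    have h : x + p ^ (j : ℕ) / 2 ≡ y + p ^ (j : ℕ) / 2 [MOD p ^ ((j : ℕ) + 1)] :=
      Nat.ModEq.add_right _ (hxy.of_dvd (pow_dvd_pow p j.2))
    rw [h]
  · -- bijectivity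
    have hinj : Function.Injective (fun (x : ZMod (p ^ n)) (j : Fin n) =>
        ((Nat.choose (x.val + p ^ (j : ℕ) / 2) (p ^ (j : ℕ)) : ZMod p))) := by
      intro x y hxy
      simp only [funext_iff] at hxy
      -- key: x.val ≡ y.val [MOD p^j] for all j ≤ n
      have key : ∀ j ≤ n, x.val ≡ y.val [MOD p ^ j] := by
        intro j hj
        induction j with
        | zero => simp [Nat.ModEq, Nat.mod_one]
        | succ j ihj =>
          have hjn : j < n := hj
          have hmod : x.val ≡ y.val [MOD p ^ j] := ihj (le_of_lt hjn)
          have hdig := hxy ⟨j, hjn⟩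
          simp only at hdig
          rw [choose_pow_eq_digit, choose_pow_eq_digit] at hdig
          have hdig' : (x.val + p ^ j / 2) / p ^ j % p = (y.val + p ^ j / 2) / p ^ j % p := by
            have := (ZMod.natCast_eq_natCast_iff _ _ _).mp hdig
            simpa [Nat.ModEq] using this
          have hmod' : (x.val + p ^ j / 2) % p ^ j = (y.val + p ^ j / 2) % p ^ j :=
            Nat.ModEq.add_right _ hmod
          have hres : (x.val + p ^ j / 2) % p ^ (j + 1) = (y.val + p ^ j / 2) % p ^ (j + 1) := by
            rw [pow_succ, mod_mul_decomp, mod_mul_decomp, hdig', hmod']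
          have : x.val + p ^ j / 2 ≡ y.val + p ^ j / 2 [MOD p ^ (j + 1)] := hres
          exact (Nat.ModEq.add_right_cancel' _ this)
      have hn' := key n le_rfl
      have hx := ZMod.val_lt x
      have hy := ZMod.val_lt y
      have : x.val = y.val := by
        have := hn'
        unfold Nat.ModEq at this
        rwa [Nat.mod_eq_of_lt hx, Nat.mod_eq_of_lt hy] at this
      exact ZMod.val_injective _ this
    rw [Fintype.bijective_iff_injective_and_card]
    refine ⟨hinj, ?_⟩
    rw [ZMod.card, Fintype.card_fun, ZMod.card, Fintype.card_fin]
end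

section
/- Let p be a prime, G = ℤ_p^*/{±1} and c a topological generator of G. Let f, g : G → ℤ_p be continuous functions and r ≥ 0 an integer such that p^r·f(x) = g(x) - g(c·x) for all x ∈ G. Then there exists a continuous function h : G → ℤ_p with f(x) = h(x) - h(c·x) for all x ∈ G. -/
/-- `G = ℤ_p^*/{±1}`, the quotient of the `p`-adic units by `±1`. -/
abbrev GG (p : ℕ) [Fact p.Prime] :=
  (ℤ_[p])ˣ ⧸ Subgroup.zpowers (-1 : (ℤ_[p])ˣ)

/-- The cokernel of `id - c^*` on `C(G, ℤ_p)` is torsion free: if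
`p^r · f = g - g∘(c·)` then `f = h - h∘(c·)` for some continuous `h`. -/
theorem coker_torsion_free (p : ℕ) [Fact p.Prime] (c : GG p)
    (hc : Dense ((Subgroup.zpowers c : Subgroup (GG p)) : Set (GG p)))
    (f g : C(GG p, ℤ_[p])) (r : ℕ)
    (hfg : ∀ x, (p : ℤ_[p]) ^ r * f x = g x - g (c * x)) :
    ∃ h : C(GG p, ℤ_[p]), ∀ x, f x = h x - h (c * x) := by
  have hp1 : (1:ℝ) < (p:ℝ) := by exact_mod_cast (Fact.out : p.Prime).one_lt
  have hp0 : (0:ℝ) < (p:ℝ) := lt_trans one_pos hp1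
  set ε : ℝ := (p:ℝ) ^ (-(r:ℤ)) with hε
  have hε0 : 0 < ε := zpow_pos hp0 _
  -- the step estimate
  have hεnorm : ‖(p:ℤ_[p]) ^ r‖ = ε := by
    rw [norm_pow, PadicInt.norm_p, hε, inv_pow, ← zpow_natCast, ← zpow_neg]
  have hstep : ∀ y : GG p, ‖g y - g (c * y)‖ ≤ ε := by
    intro y
    rw [← hfg y]
    calc ‖(p:ℤ_[p]) ^ r * f y‖ = ‖(p:ℤ_[p]) ^ r‖ * ‖f y‖ := norm_mul _ _
      _ ≤ ‖(p:ℤ_[p]) ^ r‖ * 1 := by gcongr; exact PadicInt.norm_le_one _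
      _ = ε := by rw [mul_one, hεnorm]
  have tri : ∀ a b d : ℤ_[p], ‖a - d‖ ≤ max ‖a - b‖ ‖b - d‖ := by
    intro a b d
    calc ‖a - d‖ = ‖(a - b) + (b - d)‖ := by rw [sub_add_sub_cancel]
      _ ≤ max ‖a - b‖ ‖b - d‖ := PadicInt.nonarchimedean _ _
  -- orbit estimate
  have hZ : ∀ (x : GG p) (n : ℤ), ‖g (c ^ n * x) - g x‖ ≤ ε := by
    intro x n
    induction n using Int.induction_on with
    | zero =>
        have h1 : (c ^ (0:ℤ)) * x = x := by rw [zpow_zero]; exact one_mul x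
        rw [h1, sub_self, norm_zero]
        exact le_of_lt hε0
    | succ n ih =>
        have h2 : c ^ ((n:ℤ)+1) * x = c * (c ^ (n:ℤ) * x) := by
          rw [zpow_add_one, mul_comm (c ^ (n:ℤ)) c, mul_assoc]
        refine (tri _ (g (c ^ (n:ℤ) * x)) _).trans (max_le ?_ ih)
        rw [h2, norm_sub_rev]
        exact hstep _
    | pred n ih =>
        have h2 : c * (c ^ (-(n:ℤ)-1) * x) = c ^ (-(n:ℤ)) * x := by
          rw [← mul_assoc, mul_comm c (c ^ (-(n:ℤ)-1)), ← zpow_add_one, sub_add_cancel]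
        refine (tri _ (g (c ^ (-(n:ℤ)) * x)) _).trans (max_le ?_ ih)
        rw [← h2]
        exact hstep _
  -- g is constant mod p^r
  have key : ∀ x : GG p, ‖g x - g 1‖ ≤ ε := by
    intro x
    have hclosed : IsClosed {y : GG p | ‖g (y * x) - g x‖ ≤ ε} :=
      isClosed_le (Continuous.norm (by fun_prop)) continuous_const
    have hsub : ((Subgroup.zpowers c : Subgroup (GG p)) : Set (GG p))
        ⊆ {y : GG p | ‖g (y * x) - g x‖ ≤ ε} := by
      rintro y ⟨n, rfl⟩
      exact hZ x n
    have hall : ∀ y : GG p, ‖g (y * x) - g x‖ ≤ ε := by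
      intro y
      have := hclosed.closure_subset_iff.mpr hsub
      exact this (hc.closure_eq ▸ Set.mem_univ y : y ∈ closure _)
    have := hall x⁻¹
    rw [inv_mul_cancel] at this
    rwa [norm_sub_rev] at this
  -- divisibility
  have hdvd : ∀ x : GG p, ∃ y : ℤ_[p], g x - g 1 = (p:ℤ_[p]) ^ r * y := by
    intro x
    have := (PadicInt.norm_le_pow_iff_mem_span_pow (g x - g 1) r).mp (key x)
    rw [Ideal.mem_span_singleton] at this
    obtain ⟨y, hy⟩ := this
    exact ⟨y, hy⟩
  choose k hk using hdvd
  have hpr0 : ((p:ℤ_[p]) ^ r) ≠ 0 :=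
    pow_ne_zero _ (Nat.cast_ne_zero.mpr (Fact.out : p.Prime).ne_zero)
  -- continuity of k
  have hkcont : Continuous k := by
    have hm : Topology.IsClosedEmbedding (fun z : ℤ_[p] => (p:ℤ_[p]) ^ r * z) := by
      apply Continuous.isClosedEmbedding (by fun_prop)
      intro a b hab
      exact mul_left_cancel₀ hpr0 hab
    rw [hm.toIsEmbedding.continuous_iff]
    have : (fun z : ℤ_[p] => (p:ℤ_[p]) ^ r * z) ∘ k = fun x => g x - g 1 := by
      funext x
      simp [← hk x]
    rw [this]
    fun_prop
  refine ⟨⟨k, hkcont⟩, fun x => ?_⟩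
  have : (p:ℤ_[p]) ^ r * f x = (p:ℤ_[p]) ^ r * (k x - k (c * x)) := by
    rw [hfg x, mul_sub, ← hk x, ← hk (c * x)]; ring
  simpa using mul_left_cancel₀ hpr0 this
end

section
/- Let p be a prime, G a profinite abelian group, and Λ_p(G) = lim_← ℤ_p[G/H] its completed group algebra, the inverse limit over open subgroups H ⊆ G. Then the map λ : Meas(G, ℤ_p) → Λ_p(G) sending a measure μ to the compatible family (Σ_{x ∈ G/H} μ(ε_x)·x)_H, where ε_x is the characteristic function of the coset x, is an isomorphism of ℤ_p-algebras, where Meas(G, ℤ_p) carries the convolution product. -/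
open scoped Classical Pointwise
set_option linter.unusedSectionVars false
set_option maxHeartbeats 1000000

namespace MeasAux

variable (p : ℕ) [Fact p.Prime] (G : Type*) [CommGroup G] [TopologicalSpace G]
  [IsTopologicalGroup G] [CompactSpace G] [TotallyDisconnectedSpace G] [T2Space G]

variable {G}

noncomputable instance (H : OpenSubgroup G) : Fintype (G ⧸ H.toSubgroup) :=
  Fintype.ofFinite _

/-- characteristic function of a coset -/
noncomputable def eps (H : OpenSubgroup G) (xc : G ⧸ H.toSubgroup) : C(G, ℤ_[p]) :=
  ⟨fun g => if (QuotientGroup.mk g : G ⧸ H.toSubgroup) = xc then 1 else 0, by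
    exact (continuous_of_discreteTopology
      (f := fun q : G ⧸ H.toSubgroup => if q = xc then (1:ℤ_[p]) else 0)).comp
      continuous_quotient_mk'⟩

@[simp] lemma eps_apply (H : OpenSubgroup G) (xc : G ⧸ H.toSubgroup) (g : G) :
    eps p H xc g = if (QuotientGroup.mk g : G ⧸ H.toSubgroup) = xc then 1 else 0 := rfl

lemma exists_uniform (f : C(G, ℤ_[p])) (n : ℕ) :
    ∃ K : OpenSubgroup G, ∀ g h : G, g⁻¹ * h ∈ K → ((p : ℤ_[p])^n) ∣ (f g - f h) := by
  classical
  -- the open set where f is within p^{-n} of f g₀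
  have hdvd : ∀ x y : ℤ_[p], ‖x - y‖ < (p:ℝ) ^ (-(n:ℤ) + 1) ↔ ((p:ℤ_[p])^n) ∣ (x - y) := by
    intro x y
    rw [show (-(n:ℤ) + 1) = (-(n:ℤ)) + 1 from rfl, ← PadicInt.norm_le_pow_iff_norm_lt_pow_add_one,
      PadicInt.norm_le_pow_iff_mem_span_pow, Ideal.mem_span_singleton]
  set W : G → Set G := fun g₀ => f ⁻¹' Metric.ball (f g₀) ((p:ℝ) ^ (-(n:ℤ) + 1)) with hW
  have hWopen : ∀ g₀, IsOpen (W g₀) := fun g₀ => Metric.isOpen_ball.preimage f.continuous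
  have hWmem : ∀ g₀, g₀ ∈ W g₀ := by
    intro g₀
    simp only [hW, Set.mem_preimage, Metric.mem_ball, dist_self]
    exact zpow_pos (by exact_mod_cast (Fact.out : p.Prime).pos) _
  -- choose an open subgroup for each point
  have key : ∀ g₀ : G, ∃ U : OpenSubgroup G, (g₀ • (U : Set G)) ⊆ W g₀ := by
    intro g₀
    obtain ⟨C, hC, hg₀C, hCW⟩ := compact_exists_isClopen_in_isOpen (hWopen g₀) (hWmem g₀)
    obtain ⟨U, hU⟩ := IsTopologicalGroup.exist_openSubgroup_sub_clopen_nhds_of_one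
      (W := g₀⁻¹ • C) ⟨hC.1.smul g₀⁻¹, hC.2.smul g₀⁻¹⟩ ⟨g₀, hg₀C, by simp⟩
    refine ⟨U, ?_⟩
    intro x hx
    obtain ⟨u, hu, rfl⟩ := hx
    obtain ⟨c, hc, hcu⟩ := hU hu
    have hc2 : (fun x => g₀ • x) u = c := by
      simp only [smul_eq_mul] at hcu ⊢
      rw [← hcu]; group
    exact hc2 ▸ hCW hc
  choose U hUsub using key
  obtain ⟨t, ht⟩ := IsCompact.elim_finite_subcover isCompact_univ
    (fun g₀ => g₀ • ((U g₀ : Set G))) (fun g₀ => ((U g₀).isOpen.smul g₀))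
    (fun x _ => Set.mem_iUnion.2 ⟨x, ⟨1, one_mem _, by simp⟩⟩)
  refine ⟨t.inf U, ?_⟩
  intro g h hgh
  obtain ⟨g₀, hg₀t, hg⟩ := Set.mem_iUnion₂.1 (ht (Set.mem_univ g))
  obtain ⟨u, hu, hgu⟩ := hg
  simp only [smul_eq_mul] at hgu
  have hk : g⁻¹ * h ∈ U g₀ := (Finset.inf_le hg₀t : t.inf U ≤ U g₀) hgh
  have hgW : g ∈ W g₀ := hUsub g₀ ⟨u, hu, by simpa using hgu⟩
  have hhW : h ∈ W g₀ := hUsub g₀ ⟨u * (g⁻¹ * h), mul_mem hu hk, by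
    simp only [smul_eq_mul]
    rw [← mul_assoc, hgu]
    group⟩
  simp only [hW, Set.mem_preimage, Metric.mem_ball, dist_eq_norm] at hgW hhW
  have h1 := (hdvd (f g) (f g₀)).1 hgW
  have h2 := (hdvd (f h) (f g₀)).1 hhW
  have := dvd_sub h1 h2
  simpa using this


/-- the map μ ↦ (∑ μ(ε_x)·x)_H -/
noncomputable def lam (μ : C(G, ℤ_[p]) →ₗ[ℤ_[p]] ℤ_[p]) (H : OpenSubgroup G) :
    MonoidAlgebra ℤ_[p] (G ⧸ H.toSubgroup) :=
  MonoidAlgebra.ofCoeff (Finsupp.equivFunOnFinite.symm fun xc => μ (eps p H xc))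

@[simp] lemma lam_apply (μ : C(G, ℤ_[p]) →ₗ[ℤ_[p]] ℤ_[p]) (H : OpenSubgroup G)
    (xc : G ⧸ H.toSubgroup) : (lam p μ H).coeff xc = μ (eps p H xc) := rfl

/-- the partial sums over `G ⧸ H` -/
noncomputable def Sfun (y : ∀ H : OpenSubgroup G, MonoidAlgebra ℤ_[p] (G ⧸ H.toSubgroup))
    (f : C(G, ℤ_[p])) (H : OpenSubgroup G) : ℤ_[p] :=
  (y H).coeff.sum fun xc c => c * f xc.out

lemma quot_map_out {H K : OpenSubgroup G} (hHK : H ≤ K) (a : G ⧸ H.toSubgroup) :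
    (QuotientGroup.mk ((QuotientGroup.map H.toSubgroup K.toSubgroup (MonoidHom.id G)
      (fun g hg => hHK hg) a).out) : G ⧸ K.toSubgroup)
    = QuotientGroup.map H.toSubgroup K.toSubgroup (MonoidHom.id G) (fun g hg => hHK hg) a := by
  exact Quotient.out_eq' _

lemma mk_out_eq_map {H K : OpenSubgroup G} (hHK : H ≤ K) (a : G ⧸ H.toSubgroup) :
    (QuotientGroup.mk (a.out) : G ⧸ K.toSubgroup)
    = QuotientGroup.map H.toSubgroup K.toSubgroup (MonoidHom.id G) (fun g hg => hHK hg) a := by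
  conv_rhs => rw [← Quotient.out_eq' a]
  rfl


/-- compatibility of a family -/
def Compat (y : ∀ H : OpenSubgroup G, MonoidAlgebra ℤ_[p] (G ⧸ H.toSubgroup)) : Prop :=
  ∀ (H₁ H₂ : OpenSubgroup G) (h : H₁ ≤ H₂),
    Finsupp.mapDomain
      (QuotientGroup.map H₁.toSubgroup H₂.toSubgroup (MonoidHom.id G)
        (fun g hg => h hg)) (y H₁).coeff = (y H₂).coeff

lemma out_rel {H K : OpenSubgroup G} (hHK : H ≤ K) (a : G ⧸ H.toSubgroup) :
    a.out⁻¹ * (QuotientGroup.map H.toSubgroup K.toSubgroup (MonoidHom.id G)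
      (fun g hg => hHK hg) a).out ∈ K.toSubgroup := by
  rw [← QuotientGroup.eq, mk_out_eq_map hHK, quot_map_out hHK]

lemma S_sub_dvd (y : ∀ H : OpenSubgroup G, MonoidAlgebra ℤ_[p] (G ⧸ H.toSubgroup))
    (hy : Compat p y) (f : C(G, ℤ_[p])) {H K : OpenSubgroup G} (hHK : H ≤ K) (n : ℕ)
    (hf : ∀ g h : G, g⁻¹ * h ∈ K → ((p : ℤ_[p])^n) ∣ (f g - f h)) :
    ((p : ℤ_[p])^n) ∣ (Sfun p y f H - Sfun p y f K) := by
  have h1 : Sfun p y f K = (y H).coeff.sum fun a c =>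
      c * f ((QuotientGroup.map H.toSubgroup K.toSubgroup (MonoidHom.id G)
        (fun g hg => hHK hg) a).out) := by
    rw [Sfun, ← hy H K hHK, Finsupp.sum_mapDomain_index]
    · intro b; simp
    · intro b m₁ m₂; rw [add_mul]
  rw [Sfun, h1, ← Finsupp.sum_sub]
  apply Finset.dvd_sum
  intro a _
  dsimp only
  rw [← mul_sub]
  exact Dvd.dvd.mul_left (hf _ _ (out_rel hHK a)) _

lemma S_eps (y : ∀ H : OpenSubgroup G, MonoidAlgebra ℤ_[p] (G ⧸ H.toSubgroup))
    (hy : Compat p y) {H H₀ : OpenSubgroup G} (hle : H ≤ H₀) (xc : G ⧸ H₀.toSubgroup) :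
    Sfun p y (eps p H₀ xc) H = (y H₀).coeff xc := by
  conv_rhs => rw [← hy H H₀ hle]
  rw [Finsupp.mapDomain, Finsupp.sum_apply, Sfun]
  refine Finsupp.sum_congr ?_
  intro a _
  rw [Finsupp.single_apply, eps_apply, mk_out_eq_map hle]
  split_ifs <;> simp

lemma Sfun_add (y : ∀ H : OpenSubgroup G, MonoidAlgebra ℤ_[p] (G ⧸ H.toSubgroup))
    (f g : C(G, ℤ_[p])) (H : OpenSubgroup G) :
    Sfun p y (f + g) H = Sfun p y f H + Sfun p y g H := by
  simp only [Sfun, ContinuousMap.add_apply, mul_add]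
  exact Finsupp.sum_add

lemma Sfun_smul (y : ∀ H : OpenSubgroup G, MonoidAlgebra ℤ_[p] (G ⧸ H.toSubgroup))
    (a : ℤ_[p]) (f : C(G, ℤ_[p])) (H : OpenSubgroup G) :
    Sfun p y (a • f) H = a * Sfun p y f H := by
  simp only [Sfun, ContinuousMap.smul_apply, smul_eq_mul, Finsupp.mul_sum]
  refine Finsupp.sum_congr ?_
  intro xc _
  ring

lemma eps_sum {H K : OpenSubgroup G} (hHK : H ≤ K) (zc : G ⧸ K.toSubgroup) :
    eps p K zc = ∑ a : G ⧸ H.toSubgroup,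
      if (QuotientGroup.map H.toSubgroup K.toSubgroup (MonoidHom.id G)
          (fun g hg => hHK hg) a) = zc then eps p H a else 0 := by
  ext g
  rw [ContinuousMap.sum_apply]
  have : ∀ a : G ⧸ H.toSubgroup,
      (if (QuotientGroup.map H.toSubgroup K.toSubgroup (MonoidHom.id G)
          (fun g hg => hHK hg) a) = zc then eps p H a else 0) g
      = if (QuotientGroup.mk g : G ⧸ H.toSubgroup) = a
          then (if (QuotientGroup.map H.toSubgroup K.toSubgroup (MonoidHom.id G)
            (fun g hg => hHK hg) a) = zc then 1 else 0) else 0 := by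
    intro a
    split_ifs with h1 h2 h2 <;> simp [eps_apply, h2]
  simp only [this]
  rw [Finset.sum_ite_eq (Finset.univ) (QuotientGroup.mk g : G ⧸ H.toSubgroup)]
  simp only [Finset.mem_univ, if_true, eps_apply]
  rfl

lemma lam_compat (μ : C(G, ℤ_[p]) →ₗ[ℤ_[p]] ℤ_[p]) : Compat p (lam p μ) := by
  intro H₁ H₂ h
  ext zc
  rw [Finsupp.mapDomain, Finsupp.sum_apply,
    Finsupp.sum_fintype _ _ (by intro a; simp)]
  simp only [Finsupp.single_apply, lam_apply]
  rw [eps_sum p h zc, map_sum]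
  refine Finset.sum_congr rfl ?_
  intro a _
  rw [apply_ite μ, map_zero]


lemma dvd_apply (μ : C(G, ℤ_[p]) →ₗ[ℤ_[p]] ℤ_[p]) (h : C(G, ℤ_[p])) (n : ℕ)
    (hh : ∀ g : G, ((p : ℤ_[p])^n) ∣ h g) : ((p : ℤ_[p])^n) ∣ μ h := by
  have hppos : (0 : ℝ) < (p : ℝ) := by exact_mod_cast (Fact.out : p.Prime).pos
  have hp0 : ((p : ℚ_[p])^n) ≠ 0 :=
    pow_ne_zero _ (Nat.cast_ne_zero.2 (Fact.out : p.Prime).ne_zero)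
  have hb : ∀ g : G, ‖((h g : ℚ_[p]) / (p : ℚ_[p])^n)‖ ≤ 1 := by
    intro g
    have h1 : ‖(h g : ℚ_[p])‖ ≤ (p : ℝ)^(-n : ℤ) := by
      have := (PadicInt.norm_le_pow_iff_mem_span_pow (h g) n).2
        (Ideal.mem_span_singleton.2 (hh g))
      rwa [PadicInt.norm_def] at this
    rw [norm_div, Padic.norm_p_pow, div_le_one (by positivity)]
    simpa using h1
  set r : C(G, ℤ_[p]) := ⟨fun g => ⟨(h g : ℚ_[p]) / (p : ℚ_[p])^n, hb g⟩, by
    apply Continuous.subtype_mk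
    exact (continuous_subtype_val.comp h.continuous).div_const _⟩ with hr
  have key : h = ((p : ℤ_[p])^n) • r := by
    ext g
    have : (((p : ℤ_[p])^n • r) g : ℚ_[p]) = ((p : ℚ_[p])^n) * ((h g : ℚ_[p]) / (p : ℚ_[p])^n) := by
      simp [hr, PadicInt.coe_mul]
      exact Or.inl rfl
    apply PadicInt.ext
    rw [this, mul_div_cancel₀ _ hp0]
  rw [key, map_smul]
  exact Dvd.intro _ rfl

lemma eq_zero_of_forall_dvd (x : ℤ_[p]) (hx : ∀ n : ℕ, ((p : ℤ_[p])^n) ∣ x) : x = 0 := by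
  have hple : (1 : ℝ) < (p : ℝ) := by exact_mod_cast (Fact.out : p.Prime).one_lt
  have hnorm : ∀ n : ℕ, ‖x‖ ≤ (p : ℝ)^(-n : ℤ) := fun n =>
    (PadicInt.norm_le_pow_iff_mem_span_pow x n).2 (Ideal.mem_span_singleton.2 (hx n))
  have htend : Filter.Tendsto (fun n : ℕ => (p : ℝ)^(-n : ℤ)) Filter.atTop (nhds 0) := by
    simp only [zpow_neg, zpow_natCast, ← inv_pow]
    exact tendsto_pow_atTop_nhds_zero_of_lt_one (by positivity)
      (inv_lt_one_of_one_lt₀ hple)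
  have : ‖x‖ ≤ 0 := ge_of_tendsto htend (Filter.Eventually.of_forall hnorm)
  rw [← norm_le_zero_iff]
  exact this


lemma exists_lim (y : ∀ H : OpenSubgroup G, MonoidAlgebra ℤ_[p] (G ⧸ H.toSubgroup))
    (hy : Compat p y) (f : C(G, ℤ_[p])) :
    ∃ L : ℤ_[p], Filter.Tendsto
      (fun H : (OpenSubgroup G)ᵒᵈ => Sfun p y f (OrderDual.ofDual H))
      Filter.atTop (nhds L) := by
  haveI : Nonempty (OpenSubgroup G)ᵒᵈ := ⟨OrderDual.toDual ⊤⟩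
  apply cauchySeq_tendsto_of_complete
  rw [Metric.cauchySeq_iff]
  intro ε hε
  have hple : (1 : ℝ) < (p : ℝ) := by exact_mod_cast (Fact.out : p.Prime).one_lt
  have htend : Filter.Tendsto (fun n : ℕ => (p : ℝ)^(-n : ℤ)) Filter.atTop (nhds 0) := by
    simp only [zpow_neg, zpow_natCast, ← inv_pow]
    exact tendsto_pow_atTop_nhds_zero_of_lt_one (by positivity)
      (inv_lt_one_of_one_lt₀ hple)
  obtain ⟨n, hn⟩ : ∃ n : ℕ, (p : ℝ)^(-n : ℤ) < ε :=
    (htend.eventually (gt_mem_nhds hε)).exists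
  obtain ⟨K, hK⟩ := exists_uniform p f n
  refine ⟨OrderDual.toDual K, ?_⟩
  intro H₁ h₁ H₂ h₂
  have d1 := S_sub_dvd p y hy f (show OrderDual.ofDual H₁ ≤ K from h₁) n hK
  have d2 := S_sub_dvd p y hy f (show OrderDual.ofDual H₂ ≤ K from h₂) n hK
  have hdq : ((p : ℤ_[p])^n) ∣ (Sfun p y f (OrderDual.ofDual H₁)
      - Sfun p y f (OrderDual.ofDual H₂)) := by
    have := dvd_sub d1 d2
    simpa using this
  have : ‖Sfun p y f (OrderDual.ofDual H₁) - Sfun p y f (OrderDual.ofDual H₂)‖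
      ≤ (p : ℝ)^(-n : ℤ) :=
    (PadicInt.norm_le_pow_iff_mem_span_pow _ n).2 (Ideal.mem_span_singleton.2 hdq)
  rw [dist_eq_norm]
  exact lt_of_le_of_lt this hn

end MeasAux

open MeasAux

/-- The map `λ : Meas(G, ℤ_p) → Λ_p(G) = lim_← ℤ_p[G/H]`,
`μ ↦ (∑_{x ∈ G/H} μ(ε_x)·x)_H` (with `ε_x` the characteristic function of the coset
`x`), is an isomorphism of `ℤ_p`-algebras from measures (with convolution) onto the
compatible families in `∏_H ℤ_p[G/H]` (the completed group algebra). -/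
theorem measures_iso_completed_group_algebra (p : ℕ) [Fact p.Prime]
    (G : Type*) [CommGroup G] [TopologicalSpace G] [IsTopologicalGroup G]
    [CompactSpace G] [TotallyDisconnectedSpace G] [T2Space G] :
    ∃ e : (C(G, ℤ_[p]) →ₗ[ℤ_[p]] ℤ_[p]) →
        (∀ H : OpenSubgroup G, MonoidAlgebra ℤ_[p] (G ⧸ H.toSubgroup)),
      -- defining formula: the coefficient of the coset `xc` in `e μ H` is `μ (ε_xc)`
      (∀ (μ : C(G, ℤ_[p]) →ₗ[ℤ_[p]] ℤ_[p]) (H : OpenSubgroup G)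
          (xc : G ⧸ H.toSubgroup) (f : C(G, ℤ_[p])),
          (∀ g : G, f g = if (QuotientGroup.mk g : G ⧸ H.toSubgroup) = xc then 1 else 0) →
          (e μ H).coeff xc = μ f) ∧
      -- bijectivity onto the compatible families, i.e. onto `Λ_p(G)`
      Function.Injective e ∧
      (∀ y : ∀ H : OpenSubgroup G, MonoidAlgebra ℤ_[p] (G ⧸ H.toSubgroup),
          (∀ (H₁ H₂ : OpenSubgroup G) (h : H₁ ≤ H₂),
            Finsupp.mapDomain
              (QuotientGroup.map H₁.toSubgroup H₂.toSubgroup (MonoidHom.id G)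
                (fun g hg => h hg)) (y H₁).coeff = (y H₂).coeff)
          ↔ ∃ μ, e μ = y) ∧
      -- `ℤ_p`-linearity
      (∀ μ ν, e (μ + ν) = e μ + e ν) ∧
      (∀ (a : ℤ_[p]) μ, e (a • μ) = a • e μ) ∧
      -- multiplicativity: convolution of measures goes to the product
      (∀ μ ν κ : C(G, ℤ_[p]) →ₗ[ℤ_[p]] ℤ_[p],
          (∀ f g : C(G, ℤ_[p]),
            (∀ x : G, g x = ν (f.comp ⟨fun y => x * y, continuous_mul_left x⟩)) →
            κ f = μ g) →
          e κ = e μ * e ν) := by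
  classical
  refine ⟨lam p, ?_, ?_, ?_, ?_, ?_, ?_⟩
  · -- defining formula
    intro μ H xc f hf
    have hfe : f = eps p H xc := ContinuousMap.ext fun g => by rw [hf g]; rfl
    rw [lam_apply, hfe]
  · -- injectivity
    intro μ ν h
    ext f
    have key : ∀ n : ℕ, ((p : ℤ_[p])^n) ∣ (μ f - ν f) := by
      intro n
      obtain ⟨K, hK⟩ := exists_uniform p f n
      set fK : C(G, ℤ_[p]) := ∑ xc : G ⧸ K.toSubgroup, f xc.out • eps p K xc with hfK
      have hfKg : ∀ g : G, fK g = f ((QuotientGroup.mk g : G ⧸ K.toSubgroup)).out := by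
        intro g
        rw [hfK, ContinuousMap.sum_apply]
        simp only [ContinuousMap.smul_apply, eps_apply, smul_eq_mul, mul_ite, mul_one, mul_zero]
        rw [Finset.sum_ite_eq Finset.univ (QuotientGroup.mk g : G ⧸ K.toSubgroup)
          (fun xc => f xc.out)]
        simp
      have hdvd : ∀ g : G, ((p : ℤ_[p])^n) ∣ (f - fK) g := by
        intro g
        rw [ContinuousMap.sub_apply, hfKg g]
        refine hK g _ (QuotientGroup.eq.mp ?_)
        exact (Quotient.out_eq' _).symm
      have heps : ∀ xc : G ⧸ K.toSubgroup, μ (eps p K xc) = ν (eps p K xc) := by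
        intro xc
        have := congrFun h K
        calc μ (eps p K xc) = (lam p μ K).coeff xc := rfl
          _ = (lam p ν K).coeff xc := by rw [this]
          _ = ν (eps p K xc) := rfl
      have hfKeq : μ fK = ν fK := by
        rw [hfK, map_sum, map_sum]
        refine Finset.sum_congr rfl fun xc _ => ?_
        rw [map_smul, map_smul, heps xc]
      have h1 : ((p : ℤ_[p])^n) ∣ μ (f - fK) := dvd_apply p μ _ n hdvd
      have h2 : ((p : ℤ_[p])^n) ∣ ν (f - fK) := dvd_apply p ν _ n hdvd
      have : μ f - ν f = μ (f - fK) - ν (f - fK) := by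
        rw [map_sub, map_sub, hfKeq]; ring
      rw [this]
      exact dvd_sub h1 h2
    exact sub_eq_zero.mp (eq_zero_of_forall_dvd p (μ f - ν f) key)
  · -- image = compatible families
    intro y
    constructor
    · intro hy
      haveI : Nonempty (OpenSubgroup G)ᵒᵈ := ⟨OrderDual.toDual ⊤⟩
      have hL := exists_lim p y hy
      set F : C(G, ℤ_[p]) → ℤ_[p] := fun f => (hL f).choose with hFdef
      have hF : ∀ f, Filter.Tendsto
          (fun H : (OpenSubgroup G)ᵒᵈ => Sfun p y f (OrderDual.ofDual H))
          Filter.atTop (nhds (F f)) := fun f => (hL f).choose_spec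
      set μ : C(G, ℤ_[p]) →ₗ[ℤ_[p]] ℤ_[p] :=
        { toFun := F
          map_add' := by
            intro f g
            refine tendsto_nhds_unique (hF (f + g)) ?_
            exact ((hF f).add (hF g)).congr fun H => (Sfun_add p y f g _).symm
          map_smul' := by
            intro a f
            refine tendsto_nhds_unique (hF (a • f)) ?_
            exact ((hF f).const_mul a).congr fun H => (Sfun_smul p y a f _).symm } with hμ
      refine ⟨μ, ?_⟩
      funext H₀
      ext xc
      have hconst : Filter.Tendsto
          (fun H : (OpenSubgroup G)ᵒᵈ => Sfun p y (eps p H₀ xc) (OrderDual.ofDual H))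
          Filter.atTop (nhds ((y H₀).coeff xc)) := by
        refine Filter.Tendsto.congr' ?_ tendsto_const_nhds
        filter_upwards [Filter.eventually_ge_atTop (OrderDual.toDual H₀)] with H hH
        exact (S_eps p y hy (show OrderDual.ofDual H ≤ H₀ from hH) xc).symm
      have : (lam p μ H₀).coeff xc = F (eps p H₀ xc) := rfl
      rw [this]
      exact tendsto_nhds_unique (hF _) hconst
    · rintro ⟨μ, rfl⟩
      exact lam_compat p μ
  · -- additivity
    intro μ ν
    funext H
    ext xc
    exact (Finsupp.add_apply (lam p μ H).coeff (lam p ν H).coeff xc).symm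
  · -- smul
    intro a μ
    funext H
    ext xc
    exact (Finsupp.smul_apply (b := a) (v := (lam p μ H).coeff) (a := xc)).symm
  · -- multiplicativity
    intro μ ν κ hyp
    funext H
    ext zc
    set gfun : C(G, ℤ_[p]) :=
      ∑ a : G ⧸ H.toSubgroup, ν (eps p H (a⁻¹ * zc)) • eps p H a with hgfun
    have hg : ∀ x : G, gfun x =
        ν ((eps p H zc).comp ⟨fun y => x * y, continuous_mul_left x⟩) := by
      intro x
      have hL : gfun x = ν (eps p H ((QuotientGroup.mk x : G ⧸ H.toSubgroup)⁻¹ * zc)) := by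
        rw [hgfun, ContinuousMap.sum_apply]
        simp only [ContinuousMap.smul_apply, eps_apply, smul_eq_mul, mul_ite, mul_one, mul_zero]
        rw [Finset.sum_ite_eq Finset.univ (QuotientGroup.mk x : G ⧸ H.toSubgroup)
          (fun a => ν (eps p H (a⁻¹ * zc)))]
        simp
      have hR : (eps p H zc).comp ⟨fun y => x * y, continuous_mul_left x⟩
          = eps p H ((QuotientGroup.mk x : G ⧸ H.toSubgroup)⁻¹ * zc) := by
        ext g
        simp only [ContinuousMap.comp_apply, ContinuousMap.coe_mk, eps_apply]
        rw [QuotientGroup.mk_mul]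
        congr 1
        rw [eq_iff_iff]
        constructor
        · intro hh; rw [← hh]; group
        · intro hh; rw [hh]; group
      rw [hL, hR]
    have hk : κ (eps p H zc) = μ gfun := hyp (eps p H zc) gfun hg
    have hmu : μ gfun = ∑ a : G ⧸ H.toSubgroup,
        ν (eps p H (a⁻¹ * zc)) * μ (eps p H a) := by
      rw [hgfun, map_sum]
      refine Finset.sum_congr rfl fun a _ => ?_
      rw [map_smul, smul_eq_mul]
    have hmul : (lam p μ H * lam p ν H).coeff zc = ∑ a : G ⧸ H.toSubgroup,
        μ (eps p H a) * ν (eps p H (a⁻¹ * zc)) := by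
      rw [MonoidAlgebra.coeff_mul, Finsupp.sum_fintype _ _ (by intro a; simp)]
      refine Finset.sum_congr rfl fun a _ => ?_
      rw [Finsupp.sum_fintype _ _ (by intro b; simp)]
      have : ∀ b : G ⧸ H.toSubgroup,
          (if a * b = zc then (lam p μ H).coeff a * (lam p ν H).coeff b else 0)
          = if b = a⁻¹ * zc then (lam p μ H).coeff a * (lam p ν H).coeff b else 0 := by
        intro b
        congr 1
        rw [eq_iff_iff]
        constructor
        · intro hh; rw [← hh]; group
        · intro hh; rw [hh]; group
      simp only [this]
      rw [Finset.sum_ite_eq' Finset.univ ((a : G ⧸ H.toSubgroup)⁻¹ * zc)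
        (fun b => (lam p μ H).coeff a * (lam p ν H).coeff b)]
      simp [lam_apply]
    calc (lam p κ H).coeff zc = κ (eps p H zc) := rfl
      _ = μ gfun := hk
      _ = (lam p μ H * lam p ν H).coeff zc := by
          rw [hmu, hmul]
          exact Finset.sum_congr rfl fun a _ => mul_comm _ _
end
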